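/- Let (Ω, F, μ) be a probability space, m ≥ 1, and let ε : Ω → (Fin m → ℝ) be a random vector such that each coordinate ω ↦ ε(ω)_a is integrable. Then the overestimation error of the softmax operator, τ ↦ E[ g_{ε(ω)}(τ) ], is monotonically nondecreasing on [0, ∞): for all 0 ≤ τ₁ ≤ τ₂, E[ g_{ε(ω)}(τ₁) ] ≤ E[ g_{ε(ω)}(τ₂) ]. -/

import Mathlib

open MeasureTheory

/-- The softmax-weighted value `g_x(τ) = (∑ i, exp(τ·x_i)·x_i) / (∑ i, exp(τ·x_i))`. -/
noncomputable def gval {m : ℕ} (x : Fin m → ℝ) (τ : ℝ) : ℝ :=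
  (∑ i, Real.exp (τ * x i) * x i) / (∑ i, Real.exp (τ * x i))

lemma chebyshev_weighted {m : ℕ} (w a b : Fin m → ℝ) (hw : ∀ i, 0 ≤ w i)
    (hab : ∀ i j, 0 ≤ (a i - a j) * (b i - b j)) :
    (∑ i, w i * a i) * (∑ i, w i * b i) ≤ (∑ i, w i * (a i * b i)) * (∑ i, w i) := by
  set A := ∑ i, w i * (a i * b i) with hA
  set B := ∑ i, w i with hB
  set C := ∑ i, w i * a i with hC
  set D := ∑ i, w i * b i with hD
  have key : 0 ≤ ∑ i, w i * (a i * b i * B - a i * D - b i * C + A) := by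
    have inner : ∀ i, a i * b i * B - a i * D - b i * C + A
        = ∑ j, w j * ((a i - a j) * (b i - b j)) := by
      intro i
      rw [hA, hB, hC, hD]
      simp only [Finset.mul_sum, Finset.sum_mul, ← Finset.sum_sub_distrib,
        ← Finset.sum_add_distrib]
      exact Finset.sum_congr rfl fun j _ => by ring
    refine Finset.sum_nonneg fun i _ => ?_
    rw [inner i]
    exact mul_nonneg (hw i) (Finset.sum_nonneg fun j _ =>
      mul_nonneg (hw j) (hab i j))
  have outer : ∑ i, w i * (a i * b i * B - a i * D - b i * C + A)
      = A * B - C * D - D * C + B * A := by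
    rw [hA, hB, hC, hD]
    simp only [Finset.sum_mul, Finset.mul_sum, ← Finset.sum_sub_distrib,
      ← Finset.sum_add_distrib]
    exact Finset.sum_congr rfl fun i _ => Finset.sum_congr rfl fun j _ => by ring
  rw [outer] at key
  linarith

lemma gval_mono {m : ℕ} (hm : 1 ≤ m) (x : Fin m → ℝ) {τ₁ τ₂ : ℝ} (h : τ₁ ≤ τ₂) :
    gval x τ₁ ≤ gval x τ₂ := by
  haveI : Nonempty (Fin m) := Fin.pos_iff_nonempty.mp hm
  set w : Fin m → ℝ := fun i => Real.exp (τ₁ * x i) with hw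
  set a : Fin m → ℝ := fun i => Real.exp ((τ₂ - τ₁) * x i) with ha
  have hsplit : ∀ i, Real.exp (τ₂ * x i) = w i * a i := by
    intro i
    rw [hw, ha, ← Real.exp_add]
    ring_nf
  have hwpos : ∀ i, 0 < w i := fun i => Real.exp_pos _
  have hSw : 0 < ∑ i, w i :=
    Finset.sum_pos (fun i _ => hwpos i) Finset.univ_nonempty
  have hSwa : 0 < ∑ i, w i * a i :=
    Finset.sum_pos (fun i _ => mul_pos (hwpos i) (Real.exp_pos _)) Finset.univ_nonempty
  have hab : ∀ i j, 0 ≤ (a i - a j) * (x i - x j) := by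
    intro i j
    rcases le_total (x i) (x j) with hle | hle
    · have h1 : a i ≤ a j := Real.exp_le_exp.mpr (mul_le_mul_of_nonneg_left hle (by linarith))
      nlinarith
    · have h1 : a j ≤ a i := Real.exp_le_exp.mpr (mul_le_mul_of_nonneg_left hle (by linarith))
      nlinarith
  have cheb := chebyshev_weighted w a x (fun i => (hwpos i).le) hab
  have h2 : gval x τ₂ = (∑ i, w i * (a i * x i)) / (∑ i, w i * a i) := by
    simp only [gval, hsplit, mul_assoc]
  have h1 : gval x τ₁ = (∑ i, w i * x i) / (∑ i, w i) := rfl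
  rw [h1, h2, div_le_div_iff₀ hSw hSwa]
  calc (∑ i, w i * x i) * (∑ i, w i * a i)
      = (∑ i, w i * a i) * (∑ i, w i * x i) := by ring
    _ ≤ (∑ i, w i * (a i * x i)) * (∑ i, w i) := cheb

lemma gval_abs_le {m : ℕ} (hm : 1 ≤ m) (x : Fin m → ℝ) (τ : ℝ) :
    |gval x τ| ≤ ∑ i, |x i| := by
  haveI : Nonempty (Fin m) := Fin.pos_iff_nonempty.mp hm
  have hS : 0 < ∑ i, Real.exp (τ * x i) :=
    Finset.sum_pos (fun i _ => Real.exp_pos _) Finset.univ_nonempty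
  rw [gval, abs_div, abs_of_pos hS, div_le_iff₀ hS]
  calc |∑ i, Real.exp (τ * x i) * x i|
      ≤ ∑ i, |Real.exp (τ * x i) * x i| := Finset.abs_sum_le_sum_abs _ _
    _ = ∑ i, |x i| * Real.exp (τ * x i) := by
        refine Finset.sum_congr rfl fun i _ => ?_
        rw [abs_mul, abs_of_pos (Real.exp_pos _), mul_comm]
    _ ≤ ∑ i, |x i| * (∑ j, Real.exp (τ * x j)) := by
        refine Finset.sum_le_sum fun i _ => ?_
        exact mul_le_mul_of_nonneg_left
          (Finset.single_le_sum (fun j _ => (Real.exp_pos (τ * x j)).le) (Finset.mem_univ i))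
          (abs_nonneg _)
    _ = (∑ i, |x i|) * (∑ j, Real.exp (τ * x j)) := by rw [Finset.sum_mul]

/-- Theorem 2, part (III): the softmax overestimation error `τ ↦ E[g_ε(τ)]` is
monotonically nondecreasing on `[0, ∞)`. -/
theorem expected_softmax_overestimation_monotone
    {Ω : Type*} [MeasurableSpace Ω] (μ : Measure Ω) [IsProbabilityMeasure μ]
    {m : ℕ} (hm : 1 ≤ m) (ε : Ω → Fin m → ℝ)
    (hint : ∀ a, Integrable (fun ω => ε ω a) μ)
    (τ₁ τ₂ : ℝ) (h1 : 0 ≤ τ₁) (h12 : τ₁ ≤ τ₂) :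
    (∫ ω, gval (ε ω) τ₁ ∂μ) ≤ (∫ ω, gval (ε ω) τ₂ ∂μ) := by
  have hmeas : ∀ τ : ℝ, AEStronglyMeasurable (fun ω => gval (ε ω) τ) μ := by
    intro τ
    have hnum : AEStronglyMeasurable (fun ω => ∑ i, Real.exp (τ * ε ω i) * ε ω i) μ := by
      refine Finset.aestronglyMeasurable_fun_sum _ fun i _ => ?_
      exact ((Real.continuous_exp.comp (continuous_const.mul continuous_id)).comp_aestronglyMeasurable
        (hint i).1).mul (hint i).1
    have hden : AEStronglyMeasurable (fun ω => ∑ i, Real.exp (τ * ε ω i)) μ := by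
      refine Finset.aestronglyMeasurable_fun_sum _ fun i _ => ?_
      exact (Real.continuous_exp.comp (continuous_const.mul continuous_id)).comp_aestronglyMeasurable
        (hint i).1
    simp only [gval]
    exact (hnum.aemeasurable.div hden.aemeasurable).aestronglyMeasurable
  have hbound : Integrable (fun ω => ∑ i, |ε ω i|) μ :=
    integrable_finset_sum _ fun i _ => (hint i).abs
  have hInt : ∀ τ : ℝ, Integrable (fun ω => gval (ε ω) τ) μ := by
    intro τ
    refine hbound.mono (hmeas τ) (Filter.Eventually.of_forall fun ω => ?_)
    calc ‖gval (ε ω) τ‖ = |gval (ε ω) τ| := Real.norm_eq_abs _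
      _ ≤ ∑ i, |ε ω i| := gval_abs_le hm (ε ω) τ
      _ ≤ ‖∑ i, |ε ω i|‖ := le_abs_self _
  exact integral_mono (hInt τ₁) (hInt τ₂) fun ω => gval_mono hm (ε ω) h12
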